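/- In the truncated tensor algebra of truncation level 2, for group-like elements x₁,...,x_N the barycenter has the closed form: level-1 component (1/N) Σ_i x_i^{(1)}, and level-2 component (1/N) Σ_i x_i^{(2)} - (1/(2N)) Σ_i x_i^{(1)} ⊗ x_i^{(1)} + (1/(2N²)) Σ_{i₁,i₂} x_{i₁}^{(1)} ⊗ x_{i₂}^{(1)}. That is, this element m satisfies Σ_i log(m^{-1} x_i) = 0. -/

import Mathlib

open Matrix

/-- The truncated tensor algebra `T_{d,2} = ℝ ⊕ ℝ^d ⊕ ℝ^{d×d}`: a constant term,
a level-1 vector and a level-2 matrix. -/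
structure T2 (d : ℕ) where
  c : ℝ
  v : Fin d → ℝ
  M : Matrix (Fin d) (Fin d) ℝ

namespace T2

variable {d : ℕ}

/-- Truncated tensor multiplication in `T_{d,2}` (products of total level > 2 vanish). -/
noncomputable def mul (x y : T2 d) : T2 d where
  c := x.c * y.c
  v := x.c • y.v + y.c • x.v
  M := x.c • y.M + y.c • x.M + Matrix.vecMulVec x.v y.v

/-- The inverse of a group-like element (constant term 1) in `T_{d,2}`. -/
noncomputable def inv (x : T2 d) : T2 d where
  c := 1
  v := -x.v
  M := -x.M + Matrix.vecMulVec x.v x.v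

/-- The truncated logarithm `log x = (x-1) - (1/2)(x-1)^⊗2` of an element with
constant term 1. -/
noncomputable def log (x : T2 d) : T2 d where
  c := 0
  v := x.v
  M := x.M - (1 / 2 : ℝ) • Matrix.vecMulVec x.v x.v

/-- Group-like: constant term 1 and the (level-2) shuffle relations
`x⁽¹⁾ ⊗ x⁽¹⁾ = x⁽²⁾ + (x⁽²⁾)ᵀ`. -/
def IsGroupLike (x : T2 d) : Prop :=
  x.c = 1 ∧ x.M + x.Mᵀ = Matrix.vecMulVec x.v x.v

end T2

/-- In truncation level 2, the barycenter of group-like `x₁,…,x_N` has the closed form: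
level-1 component `(1/N) Σ_i x_i⁽¹⁾`, level-2 component
`(1/N) Σ_i x_i⁽²⁾ - (1/(2N)) Σ_i x_i⁽¹⁾⊗x_i⁽¹⁾ + (1/(2N²)) Σ_{i₁,i₂} x_{i₁}⁽¹⁾⊗x_{i₂}⁽¹⁾`.
That is, this element `m` satisfies `Σ_i log(m⁻¹ x_i) = 0` (in all levels). -/
theorem barycenter_closed_form_level2 (d N : ℕ) (hN : 0 < N)
    (x : Fin N → T2 d) (hx : ∀ i, (x i).IsGroupLike)
    (m : T2 d) (hc : m.c = 1)
    (hv : m.v = (1 / (N : ℝ)) • ∑ i, (x i).v)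
    (hM : m.M = (1 / (N : ℝ)) • ∑ i, (x i).M
        - (1 / (2 * (N : ℝ))) • ∑ i, Matrix.vecMulVec (x i).v (x i).v
        + (1 / (2 * (N : ℝ) ^ 2)) • ∑ i₁, ∑ i₂, Matrix.vecMulVec (x i₁).v (x i₂).v) :
    (∑ i, (T2.log (T2.mul (T2.inv m) (x i))).c = 0) ∧
    (∑ i, (T2.log (T2.mul (T2.inv m) (x i))).v = 0) ∧
    (∑ i, (T2.log (T2.mul (T2.inv m) (x i))).M = 0) := by
  have hN' : (N:ℝ) ≠ 0 := Nat.cast_ne_zero.mpr hN.ne'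
  have hxc : ∀ i, (x i).c = 1 := fun i => (hx i).1
  have hva : ∀ a, m.v a = (1 / (N : ℝ)) * ∑ i, (x i).v a := by
    intro a; rw [hv]; simp [Finset.sum_apply]
  have hMa : ∀ a b, m.M a b = (1 / (N : ℝ)) * ∑ i, (x i).M a b
      - (1 / (2 * (N : ℝ))) * ∑ i, (x i).v a * (x i).v b
      + (1 / (2 * (N : ℝ) ^ 2)) * ((∑ i, (x i).v a) * (∑ i, (x i).v b)) := by
    intro a b
    rw [hM]
    simp only [Matrix.sub_apply, Matrix.add_apply, Matrix.smul_apply, Matrix.sum_apply,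
      Matrix.vecMulVec_apply, smul_eq_mul, Finset.sum_mul_sum]
  refine ⟨by simp [T2.log], ?_, ?_⟩
  · funext a
    simp only [T2.log, T2.mul, T2.inv, hxc, hc, one_smul, Finset.sum_apply, Pi.add_apply,
      Pi.smul_apply, Pi.neg_apply, smul_eq_mul, one_mul, Pi.zero_apply, hva]
    rw [Finset.sum_add_distrib, Finset.sum_const, Finset.card_univ, Fintype.card_fin]
    field_simp
    linear_combination (-(∑ i, (x i).v a)) * (mul_inv_cancel₀ hN')
  · funext a b
    simp only [T2.log, T2.mul, T2.inv, hxc, hc, one_smul, Finset.sum_apply, Pi.add_apply,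
      Pi.smul_apply, Pi.neg_apply, smul_eq_mul, one_mul, Pi.zero_apply,
      Matrix.sub_apply, Matrix.add_apply, Matrix.smul_apply, Matrix.neg_apply,
      Matrix.sum_apply, Matrix.vecMulVec_apply, Matrix.zero_apply]
    have expand : ∀ i : Fin N,
        (x i).M a b + (-(m.M a b) + m.v a * m.v b) + -(m.v a) * (x i).v b
          - 1 / 2 * (((x i).v a + -(m.v a)) * ((x i).v b + -(m.v b)))
        = ((x i).M a b - 1/2 * ((x i).v a * (x i).v b))
          + (-(m.M a b) + 1/2 * (m.v a * m.v b))
          + (-(1/2) * m.v a) * (x i).v b + (1/2 * m.v b) * (x i).v a := by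
      intro i; ring
    rw [Finset.sum_congr rfl (fun i _ => expand i)]
    rw [Finset.sum_add_distrib, Finset.sum_add_distrib, Finset.sum_add_distrib,
      Finset.sum_sub_distrib, Finset.sum_const, Finset.card_univ, Fintype.card_fin,
      ← Finset.mul_sum, ← Finset.mul_sum, ← Finset.mul_sum, hMa a b, hva a, hva b]
    field_simp
    linear_combination ((∑ i, (x i).v a * (x i).v b) - 2 * (∑ i, (x i).M a b)) * (N:ℝ) * ((N:ℝ) * (N:ℝ)⁻¹ + 1) * (mul_inv_cancel₀ hN')
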